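/- Let h be the logistic function and φ the standard normal density. Let f₅ : ℝ × ℝ → ℝ be measurable in its second argument with 0 ≤ f₅(η, u) ≤ K for all η, u. Then for fixed η, as σ → ∞, ∫_ℝ f₅(η, σu)·h(η + σu)·φ(u) du = ∫_ℝ f₅(η, σu)·S(η + σu)·φ(u) du + O(σ^{-1}), i.e. the absolute difference between the two integrals is bounded by C/σ for some constant C depending only on K and η. -/

import Mathlib

open MeasureTheory

noncomputable def logistic (t : ℝ) : ℝ := 1 / (1 + Real.exp (-t))
noncomputable def step (t : ℝ) : ℝ := if 0 < t then 1 else 0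
noncomputable def stdNormalPDF (u : ℝ) : ℝ :=
  (Real.sqrt (2 * Real.pi))⁻¹ * Real.exp (-u ^ 2 / 2)

lemma logistic_nonneg (t : ℝ) : 0 ≤ logistic t := by
  unfold logistic
  positivity

lemma logistic_le_one (t : ℝ) : logistic t ≤ 1 := by
  unfold logistic
  rw [div_le_one (by positivity)]
  nlinarith [Real.exp_pos (-t)]

lemma step_nonneg (t : ℝ) : 0 ≤ step t := by
  unfold step; split <;> norm_num

lemma step_le_one (t : ℝ) : step t ≤ 1 := by
  unfold step; split <;> norm_num

lemma abs_logistic_sub_step (t : ℝ) : |logistic t - step t| ≤ Real.exp (-|t|) := by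
  unfold logistic step
  by_cases ht : 0 < t
  · rw [if_pos ht, abs_of_nonpos (by
      rw [sub_nonpos, div_le_one (by positivity)]
      nlinarith [Real.exp_pos (-t)]), abs_of_pos ht]
    have h1 : 0 < 1 + Real.exp (-t) := by positivity
    rw [neg_sub, sub_div' (ne_of_gt h1), div_le_iff₀ h1]
    nlinarith [Real.exp_pos (-t), Real.one_le_exp (le_of_lt ht)]
  · rw [if_neg ht, sub_zero, abs_of_nonneg (by positivity),
      abs_of_nonpos (not_lt.mp ht)]
    have h1 : 0 < 1 + Real.exp (-t) := by positivity
    rw [div_le_iff₀ h1, neg_neg]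
    have he : Real.exp t * Real.exp (-t) = 1 := by
      rw [← Real.exp_add]; simp
    nlinarith [Real.exp_pos t]

lemma integrable_exp_neg_abs : Integrable (fun x : ℝ => Real.exp (-|x|)) := by
  rw [← integrableOn_univ, ← Set.Iic_union_Ioi (a := (0:ℝ)), integrableOn_union]
  constructor
  · exact (integrableOn_exp_Iic 0).congr_fun
      (fun x hx => by
        simp only [Set.mem_Iic] at hx
        simp [abs_of_nonpos hx]) measurableSet_Iic
  · exact (exp_neg_integrableOn_Ioi 0 one_pos).congr_fun
      (fun x hx => by
        simp only [Set.mem_Ioi] at hx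
        simp [abs_of_pos hx]) measurableSet_Ioi

lemma integrable_stdNormalPDF : Integrable stdNormalPDF := by
  unfold stdNormalPDF
  apply Integrable.const_mul
  have : ∀ u : ℝ, -u ^ 2 / 2 = -((1:ℝ)/2) * u ^ 2 := fun u => by ring
  simp_rw [this]
  exact integrable_exp_neg_mul_sq (by norm_num)

theorem smoothing_step_approx (K : ℝ) (hK : 0 < K) (f₅ : ℝ → ℝ → ℝ)
    (hmeas : ∀ η : ℝ, Measurable (f₅ η))
    (hbdd : ∀ η u : ℝ, 0 ≤ f₅ η u ∧ f₅ η u ≤ K) (η : ℝ) :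
    ∃ C : ℝ, ∀ σ : ℝ, 0 < σ →
      |(∫ u : ℝ, f₅ η (σ * u) * logistic (η + σ * u) * stdNormalPDF u) -
        ∫ u : ℝ, f₅ η (σ * u) * step (η + σ * u) * stdNormalPDF u| ≤ C / σ := by
  set c : ℝ := (Real.sqrt (2 * Real.pi))⁻¹ with hc
  have hc0 : 0 ≤ c := by positivity
  have hcI : ∀ u : ℝ, 0 ≤ stdNormalPDF u ∧ stdNormalPDF u ≤ c := by
    intro u
    constructor
    · unfold stdNormalPDF; positivity
    · unfold stdNormalPDF
      rw [← mul_one c]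
      apply mul_le_mul_of_nonneg_left _ hc0
      rw [← Real.exp_zero]
      apply Real.exp_le_exp.mpr
      nlinarith [sq_nonneg u]
  refine ⟨K * c * ∫ x : ℝ, Real.exp (-|x|), fun σ hσ => ?_⟩
  -- integrability of the two integrands
  have hmeasσ : Measurable (fun u : ℝ => f₅ η (σ * u)) :=
    (hmeas η).comp (measurable_const_mul σ)
  have hcont_pdf : Continuous stdNormalPDF := by
    unfold stdNormalPDF
    continuity
  have hcont_log : Continuous logistic := by
    unfold logistic
    apply Continuous.div continuous_const
    · continuity
    · intro x; positivity
  have hmeas_step : Measurable step := by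
    unfold step
    exact Measurable.ite measurableSet_Ioi measurable_const measurable_const
  have hbound : Integrable (fun u : ℝ => K * stdNormalPDF u) :=
    integrable_stdNormalPDF.const_mul K
  have hint : ∀ g : ℝ → ℝ, Measurable g → (∀ t, 0 ≤ g t) → (∀ t, g t ≤ 1) →
      Integrable (fun u : ℝ => f₅ η (σ * u) * g (η + σ * u) * stdNormalPDF u) := by
    intro g hg hg0 hg1
    apply Integrable.mono' hbound
    · exact ((hmeasσ.mul ((hg.comp (measurable_const_add η |>.comp
        (measurable_const_mul σ))))).mul hcont_pdf.measurable).aestronglyMeasurable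
    · filter_upwards with u
      have h1 := (hbdd η (σ * u)).1
      have h2 := (hbdd η (σ * u)).2
      have h3 := hg0 (η + σ * u)
      have h4 := hg1 (η + σ * u)
      have h5 := (hcI u).1
      rw [Real.norm_eq_abs, abs_of_nonneg (by positivity)]
      apply mul_le_mul_of_nonneg_right _ h5
      nlinarith
  have hintL := hint logistic hcont_log.measurable logistic_nonneg logistic_le_one
  have hintS := hint step hmeas_step step_nonneg step_le_one
  rw [← integral_sub hintL hintS]
  -- dominating function
  have hdom : Integrable (fun u : ℝ => K * c * Real.exp (-|η + σ * u|)) := by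
    apply Integrable.const_mul
    have h1 : Integrable (fun x : ℝ => Real.exp (-|x + η|)) := by
      have := integrable_exp_neg_abs.comp_add_right η
      exact this
    have h2 := h1.comp_mul_left' (ne_of_gt hσ)
    apply h2.congr
    filter_upwards with u
    rw [add_comm η (σ * u)]
  calc |∫ u : ℝ, (f₅ η (σ * u) * logistic (η + σ * u) * stdNormalPDF u -
          f₅ η (σ * u) * step (η + σ * u) * stdNormalPDF u)|
      ≤ ∫ u : ℝ, |f₅ η (σ * u) * logistic (η + σ * u) * stdNormalPDF u -
          f₅ η (σ * u) * step (η + σ * u) * stdNormalPDF u| :=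
        by simpa [Real.norm_eq_abs] using
          norm_integral_le_integral_norm (μ := volume)
            (fun u : ℝ => f₅ η (σ * u) * logistic (η + σ * u) * stdNormalPDF u -
              f₅ η (σ * u) * step (η + σ * u) * stdNormalPDF u)
    _ ≤ ∫ u : ℝ, K * c * Real.exp (-|η + σ * u|) := by
        apply integral_mono_of_nonneg
        · filter_upwards with u; positivity
        · exact hdom
        · filter_upwards with u
          have heq : f₅ η (σ * u) * logistic (η + σ * u) * stdNormalPDF u -
              f₅ η (σ * u) * step (η + σ * u) * stdNormalPDF u =
              f₅ η (σ * u) * (logistic (η + σ * u) - step (η + σ * u)) * stdNormalPDF u := by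
            ring
          rw [heq, abs_mul, abs_mul]
          have h1 := (hbdd η (σ * u)).1
          have h2 := (hbdd η (σ * u)).2
          have h3 := abs_logistic_sub_step (η + σ * u)
          have h4 := (hcI u).1
          have h5 := (hcI u).2
          have h6 : |f₅ η (σ * u)| ≤ K := by rwa [abs_of_nonneg h1]
          have h7 : |stdNormalPDF u| ≤ c := by rwa [abs_of_nonneg h4]
          have h8 : (0:ℝ) ≤ |logistic (η + σ * u) - step (η + σ * u)| := abs_nonneg _
          have h9 : (0:ℝ) < Real.exp (-|η + σ * u|) := Real.exp_pos _
          calc |f₅ η (σ * u)| * |logistic (η + σ * u) - step (η + σ * u)| * |stdNormalPDF u|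
              ≤ K * Real.exp (-|η + σ * u|) * c := by
                apply mul_le_mul _ h7 (abs_nonneg _) (by positivity)
                exact mul_le_mul h6 h3 h8 (le_of_lt hK)
            _ = K * c * Real.exp (-|η + σ * u|) := by ring
    _ = K * c * ∫ u : ℝ, Real.exp (-|η + σ * u|) := integral_const_mul _ _
    _ = (K * c * ∫ x : ℝ, Real.exp (-|x|)) / σ := by
        have h1 : (fun u : ℝ => Real.exp (-|η + σ * u|)) =
            fun u : ℝ => Real.exp (-|σ * u + η|) := by
          funext u; rw [add_comm]
        have h2 := MeasureTheory.Measure.integral_comp_mul_left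
          (fun x : ℝ => Real.exp (-|x + η|)) σ
        have h3 := MeasureTheory.integral_add_right_eq_self (μ := volume)
          (fun x : ℝ => Real.exp (-|x|)) η
        rw [h1, h2, h3, abs_of_pos (inv_pos.mpr hσ), smul_eq_mul]
        ring
  done
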